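/- Let φ ∈ ℂ² be nonzero, let u ∈ SU(2) satisfy u·(0, ‖φ‖)ᵀ = φ, and let α ∈ ℂ with |α| = 1. Set α̃ = diag(α, α⁻¹). Then ‖α⁻¹·φ‖ = ‖φ‖, the matrix u·α̃ belongs to SU(2), and (u·α̃)·(0, ‖α⁻¹·φ‖)ᵀ = α⁻¹·φ. (Hence the dressing field u transforms as u ↦ u·α̃ under U(1) gauge transformations φ ↦ α⁻¹φ.) -/

import Mathlib

/-- U(1)-gauge transformation of the dressing field: if `u ∈ SU(2)` satisfies
`u · (0, ‖φ‖)ᵀ = φ` and `|α| = 1`, then with `α̃ = diag(α, α⁻¹)` and `ψ = α⁻¹·φ` one has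
`‖ψ‖ = ‖φ‖`, `u·α̃ ∈ SU(2)`, and `(u·α̃) · (0, ‖ψ‖)ᵀ = ψ`. -/
theorem stmt10 (φ ψ : EuclideanSpace ℂ (Fin 2)) (hφ : φ ≠ 0)
    (u : Matrix (Fin 2) (Fin 2) ℂ)
    (hu : u ∈ Matrix.specialUnitaryGroup (Fin 2) ℂ)
    (huφ : Matrix.mulVec u ![0, (‖φ‖ : ℂ)] = φ)
    (α : ℂ) (hα : ‖α‖ = 1)
    (hψ : ψ = α⁻¹ • φ) :
    ‖ψ‖ = ‖φ‖ ∧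
    u * Matrix.diagonal ![α, α⁻¹] ∈ Matrix.specialUnitaryGroup (Fin 2) ℂ ∧
    Matrix.mulVec (u * Matrix.diagonal ![α, α⁻¹]) ![0, (‖ψ‖ : ℂ)] = ψ := by
  have hα0 : α ≠ 0 := by
    intro h; rw [h] at hα; simp at hα
  have hinv : ‖α⁻¹‖ = 1 := by
    rw [norm_inv, hα]; norm_num
  have hnorm : ‖ψ‖ = ‖φ‖ := by
    rw [hψ, norm_smul]
    rw [hinv, one_mul]
  have hD : Matrix.diagonal ![α, α⁻¹] ∈ Matrix.specialUnitaryGroup (Fin 2) ℂ := by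
    rw [Matrix.mem_specialUnitaryGroup_iff]
    constructor
    · rw [Matrix.mem_unitaryGroup_iff]
      ext i j
      have h1 : α * (starRingEnd ℂ) α = 1 := by
        rw [Complex.mul_conj, Complex.normSq_eq_norm_sq, hα]; norm_num
      fin_cases i <;> fin_cases j <;>
        simp [Matrix.mul_apply, Matrix.diagonal, Fin.sum_univ_two, h1, ← mul_inv,
          Matrix.one_apply]
    · rw [Matrix.det_diagonal]
      simp [Fin.prod_univ_two, mul_inv_cancel₀ hα0]
  refine ⟨hnorm, Submonoid.mul_mem _ hu hD, ?_⟩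
  rw [← Matrix.mulVec_mulVec]
  have hdv : Matrix.mulVec (Matrix.diagonal ![α, α⁻¹]) ![0, (‖ψ‖ : ℂ)]
      = α⁻¹ • ![0, (‖φ‖ : ℂ)] := by
    ext i
    fin_cases i <;> simp [Matrix.mulVec_diagonal, hnorm]
  rw [hdv, Matrix.mulVec_smul, huφ, hψ]
  rfl
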